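/- For m = -1/3 and a > √6, the function f(t) = √(a²-6) · [ (a+√(a²-6)) e^{t√(a²-6)/6} + (a-√(a²-6)) e^{-t√(a²-6)/6} ] / [ (a+√(a²-6)) e^{t√(a²-6)/6} - (a-√(a²-6)) e^{-t√(a²-6)/6} ] is defined for all t ≥ 0 (the denominator never vanishes), satisfies f(0) = a, f'(0) = -1, f'(t) → 0 as t → ∞, and solves f' + (1/6)f² = -1 + a²/6 on [0,∞); consequently it solves f''' + (1/3) f f'' + (1/3)(f')² = 0 with the boundary conditions of the problem. -/

import Mathlib

open Real Set Filter Topology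

private lemma aux19 (a c : ℝ) (hc : 0 < c) (hac : c < a) (hc2 : c ^ 2 = a ^ 2 - 6)
    (f : ℝ → ℝ)
    (hf : ∀ t, f t = c * ((a + c) * Real.exp (t * c / 6) + (a - c) * Real.exp (-(t * c / 6)))
        / ((a + c) * Real.exp (t * c / 6) - (a - c) * Real.exp (-(t * c / 6)))) :
    (∀ t ∈ Set.Ici (0:ℝ),
        (a + c) * Real.exp (t * c / 6) - (a - c) * Real.exp (-(t * c / 6)) ≠ 0)
    ∧ f 0 = a
    ∧ deriv f 0 = -1
    ∧ Filter.Tendsto (deriv f) Filter.atTop (nhds 0)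
    ∧ (∀ t ∈ Set.Ici (0:ℝ), deriv f t + 1 / 6 * (f t) ^ 2 = -1 + a ^ 2 / 6)
    ∧ ∀ t ∈ Set.Ici (0:ℝ),
        deriv (deriv (deriv f)) t + 1 / 3 * f t * deriv (deriv f) t
          + 1 / 3 * (deriv f t) ^ 2 = 0 := by
  have hP : 0 < a + c := by linarith
  have hQ : 0 < a - c := by linarith
  set S : Set ℝ := {t | (a - c) * Real.exp (-(t * c / 6)) < (a + c) * Real.exp (t * c / 6)}
    with hSdef
  have hSopen : IsOpen S := isOpen_lt (by continuity) (by continuity)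
  have hIci : Set.Ici (0:ℝ) ⊆ S := by
    intro t ht
    have ht' : (0:ℝ) ≤ t := ht
    have hu : (0:ℝ) ≤ t * c / 6 := by positivity
    have h1 : Real.exp (-(t * c / 6)) ≤ 1 := Real.exp_le_one_iff.mpr (by linarith)
    have h2 : (1:ℝ) ≤ Real.exp (t * c / 6) := Real.one_le_exp hu
    have : (a - c) * Real.exp (-(t * c / 6)) ≤ (a - c) * 1 := by nlinarith
    have : (a + c) * 1 ≤ (a + c) * Real.exp (t * c / 6) := by nlinarith
    show (a - c) * Real.exp (-(t * c / 6)) < (a + c) * Real.exp (t * c / 6)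
    nlinarith
  have hDpos : ∀ t ∈ S, 0 < (a + c) * Real.exp (t * c / 6) - (a - c) * Real.exp (-(t * c / 6)) :=
    fun t ht => sub_pos.mpr ht
  have hexp : ∀ t : ℝ, HasDerivAt (fun s : ℝ => Real.exp (s * c / 6))
      (c / 6 * Real.exp (t * c / 6)) t := by
    intro t
    have h : HasDerivAt (fun s : ℝ => s * c / 6) (c / 6) t := by
      simpa using ((hasDerivAt_id t).mul_const c).div_const 6
    simpa [mul_comm] using h.exp
  have hexp' : ∀ t : ℝ, HasDerivAt (fun s : ℝ => Real.exp (-(s * c / 6)))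
      (-(c / 6) * Real.exp (-(t * c / 6))) t := by
    intro t
    have h : HasDerivAt (fun s : ℝ => -(s * c / 6)) (-(c / 6)) t := by
      exact (((hasDerivAt_id t).mul_const c).div_const 6).neg.congr_deriv (by ring)
    simpa [mul_comm] using h.exp
  have hfe : f = fun t => c * ((a + c) * Real.exp (t * c / 6) + (a - c) * Real.exp (-(t * c / 6)))
        / ((a + c) * Real.exp (t * c / 6) - (a - c) * Real.exp (-(t * c / 6))) := funext hf
  have hfd : ∀ t ∈ S, HasDerivAt f ((c ^ 2 - f t ^ 2) / 6) t := by
    intro t ht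
    have hD := (hDpos t ht).ne'
    have hnum : HasDerivAt
        (fun s => c * ((a + c) * Real.exp (s * c / 6) + (a - c) * Real.exp (-(s * c / 6))))
        (c * ((a + c) * (c / 6 * Real.exp (t * c / 6))
            + (a - c) * (-(c / 6) * Real.exp (-(t * c / 6))))) t :=
      (((hexp t).const_mul (a + c)).add ((hexp' t).const_mul (a - c))).const_mul c
    have hden : HasDerivAt
        (fun s => (a + c) * Real.exp (s * c / 6) - (a - c) * Real.exp (-(s * c / 6)))
        ((a + c) * (c / 6 * Real.exp (t * c / 6))
            - (a - c) * (-(c / 6) * Real.exp (-(t * c / 6)))) t :=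
      ((hexp t).const_mul (a + c)).sub ((hexp' t).const_mul (a - c))
    have hd := hnum.div hden hD
    rw [hfe]
    convert hd using 1
    rfl
    rfl
    rfl
    rw [div_pow, div_eq_div_iff (by norm_num : (6:ℝ) ≠ 0) (pow_ne_zero 2 hD),
      sub_mul, div_mul_cancel₀ _ (pow_ne_zero 2 hD)]
    ring
  have hfS : ∀ t ∈ S, deriv f t = (c ^ 2 - f t ^ 2) / 6 := fun t ht => (hfd t ht).deriv
  have hd1ev : ∀ t ∈ S, deriv f =ᶠ[𝓝 t] fun s => (c ^ 2 - f s ^ 2) / 6 := by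
    intro t ht
    filter_upwards [hSopen.mem_nhds ht] with s hs using hfS s hs
  have hfd2 : ∀ t ∈ S, HasDerivAt (fun s => (c ^ 2 - f s ^ 2) / 6)
      (-(f t * ((c ^ 2 - f t ^ 2) / 6)) / 3) t := by
    intro t ht
    have h := ((hasDerivAt_const t (c ^ 2)).sub ((hfd t ht).pow 2)).div_const 6
    convert h using 1
    rfl
    rfl
    rfl
    ring
  have hd2 : ∀ t ∈ S, deriv (deriv f) t = -(f t * ((c ^ 2 - f t ^ 2) / 6)) / 3 := by
    intro t ht
    rw [(hd1ev t ht).deriv_eq]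
    exact (hfd2 t ht).deriv
  have hd2ev : ∀ t ∈ S, deriv (deriv f) =ᶠ[𝓝 t]
      fun s => -(f s * ((c ^ 2 - f s ^ 2) / 6)) / 3 := by
    intro t ht
    filter_upwards [hSopen.mem_nhds ht] with s hs using hd2 s hs
  have hfd3 : ∀ t ∈ S, HasDerivAt (fun s => -(f s * ((c ^ 2 - f s ^ 2) / 6)) / 3)
      (-(((c ^ 2 - f t ^ 2) / 6) ^ 2 + f t * (-(f t * ((c ^ 2 - f t ^ 2) / 6)) / 3)) / 3) t := by
    intro t ht
    have h := (((hfd t ht).mul (hfd2 t ht)).neg).div_const 3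
    convert h using 1
    rfl
    rfl
    rfl
    ring
  have hd3 : ∀ t ∈ S, deriv (deriv (deriv f)) t =
      -(((c ^ 2 - f t ^ 2) / 6) ^ 2 + f t * (-(f t * ((c ^ 2 - f t ^ 2) / 6)) / 3)) / 3 := by
    intro t ht
    rw [(hd2ev t ht).deriv_eq]
    exact (hfd3 t ht).deriv
  have hf0 : f 0 = a := by
    rw [hf 0, show (0:ℝ) * c / 6 = 0 by ring]
    norm_num [Real.exp_zero]
    rw [div_eq_iff (by positivity : c + c ≠ 0)]
    ring
  -- tendsto
  have key : ∀ t, f t = c * ((a + c) + (a - c) * Real.exp (-(t * c / 3)))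
      / ((a + c) - (a - c) * Real.exp (-(t * c / 3))) := by
    intro t
    rw [hf t]
    rw [show Real.exp (-(t * c / 6)) = Real.exp (t * c / 6) * Real.exp (-(t * c / 3)) by
      rw [← Real.exp_add]; ring_nf]
    rw [show c * ((a + c) * Real.exp (t * c / 6)
          + (a - c) * (Real.exp (t * c / 6) * Real.exp (-(t * c / 3))))
        = Real.exp (t * c / 6) * (c * ((a + c) + (a - c) * Real.exp (-(t * c / 3)))) by ring,
      show (a + c) * Real.exp (t * c / 6)
          - (a - c) * (Real.exp (t * c / 6) * Real.exp (-(t * c / 3)))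
        = Real.exp (t * c / 6) * ((a + c) - (a - c) * Real.exp (-(t * c / 3))) by ring]
    exact mul_div_mul_left _ _ (Real.exp_ne_zero _)
  have hE : Tendsto (fun t : ℝ => Real.exp (-(t * c / 3))) atTop (𝓝 0) := by
    apply Real.tendsto_exp_atBot.comp
    have h1 : Tendsto (fun t : ℝ => t * -(c / 3)) atTop atBot :=
      Filter.Tendsto.atTop_mul_const_of_neg (by linarith) tendsto_id
    have h2 : (fun t : ℝ => -(t * c / 3)) = fun t : ℝ => t * -(c / 3) := by funext t; ring
    rw [h2]
    exact h1
  have hftend : Tendsto f atTop (𝓝 c) := by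
    have hnum : Tendsto (fun t : ℝ => c * ((a + c) + (a - c) * Real.exp (-(t * c / 3)))) atTop
        (𝓝 (c * ((a + c) + (a - c) * 0))) :=
      tendsto_const_nhds.mul (tendsto_const_nhds.add (tendsto_const_nhds.mul hE))
    have hden : Tendsto (fun t : ℝ => (a + c) - (a - c) * Real.exp (-(t * c / 3))) atTop
        (𝓝 ((a + c) - (a - c) * 0)) :=
      tendsto_const_nhds.sub (tendsto_const_nhds.mul hE)
    have hne : (a + c) - (a - c) * 0 ≠ 0 := by simp; linarith
    have hlim := hnum.div hden hne
    have hval : c * ((a + c) + (a - c) * 0) / ((a + c) - (a - c) * 0) = c := by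
      field_simp
      ring
    rw [hval] at hlim
    exact Tendsto.congr (fun t => (key t).symm) hlim
  have hdtend : Tendsto (deriv f) atTop (𝓝 0) := by
    have h1t : Tendsto (fun t => (c ^ 2 - f t ^ 2) / 6) atTop (𝓝 ((c ^ 2 - c ^ 2) / 6)) :=
      (tendsto_const_nhds.sub (hftend.pow 2)).div_const 6
    rw [show (c ^ 2 - c ^ 2) / 6 = (0:ℝ) by ring] at h1t
    refine Tendsto.congr' ?_ h1t
    filter_upwards [eventually_ge_atTop (0:ℝ)] with t ht using (hfS t (hIci ht)).symm
  refine ⟨fun t ht => (hDpos t (hIci ht)).ne', hf0, ?_, hdtend, ?_, ?_⟩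
  · rw [hfS 0 (hIci Set.self_mem_Ici), hf0]
    rw [hc2]; ring
  · intro t ht
    rw [hfS t (hIci ht), hc2]
    ring
  · intro t ht
    rw [hd3 t (hIci ht), hd2 t (hIci ht), hfS t (hIci ht)]
    ring

theorem stmt19 (a : ℝ) (ha : Real.sqrt 6 < a) :
    let c := Real.sqrt (a ^ 2 - 6)
    let f : ℝ → ℝ := fun t =>
      c * ((a + c) * Real.exp (t * c / 6) + (a - c) * Real.exp (-(t * c / 6)))
        / ((a + c) * Real.exp (t * c / 6) - (a - c) * Real.exp (-(t * c / 6)))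
    (∀ t ∈ Set.Ici (0:ℝ),
        (a + c) * Real.exp (t * c / 6) - (a - c) * Real.exp (-(t * c / 6)) ≠ 0)
    ∧ f 0 = a
    ∧ deriv f 0 = -1
    ∧ Filter.Tendsto (deriv f) Filter.atTop (nhds 0)
    ∧ (∀ t ∈ Set.Ici (0:ℝ), deriv f t + 1 / 6 * (f t) ^ 2 = -1 + a ^ 2 / 6)
    ∧ ∀ t ∈ Set.Ici (0:ℝ),
        deriv (deriv (deriv f)) t + 1 / 3 * f t * deriv (deriv f) t
          + 1 / 3 * (deriv f t) ^ 2 = 0 := by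
  intro c f
  have h6 : (0:ℝ) ≤ 6 := by norm_num
  have ha0 : 0 < a := lt_of_le_of_lt (Real.sqrt_nonneg 6) ha
  have ha6 : 6 < a ^ 2 := by nlinarith [Real.sq_sqrt h6, Real.sqrt_nonneg 6]
  have hc2 : c ^ 2 = a ^ 2 - 6 := Real.sq_sqrt (by linarith)
  have hc0 : 0 < c := Real.sqrt_pos.mpr (by linarith)
  have hca : c < a := by nlinarith
  exact aux19 a c hc0 hca hc2 f (fun t => rfl)
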